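/- Let f : S¹ → S¹ be a transitive covering map of degree d with |d| > 1 (i.e., some point has dense forward orbit). Then f is topologically conjugate to m_d(z) = z^d. -/

import Mathlib

noncomputable section

abbrev S1 := AddCircle (1 : ℝ)

def proj : ℝ → S1 := fun x => (x : S1)

def md (d : ℤ) : S1 → S1 := fun z => d • z

open Set Function

section Helpers

lemma proj_eq_iff {x y : ℝ} : proj x = proj y ↔ ∃ m : ℤ, y = x + m := by
  rw [proj, proj, QuotientAddGroup.eq_iff_sub_mem]
  constructor
  · rintro h
    obtain ⟨m, hm⟩ := AddSubgroup.mem_zmultiples_iff.mp h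
    rw [zsmul_eq_mul, mul_one] at hm
    exact ⟨-m, by push_cast; linarith⟩
  · rintro ⟨m, rfl⟩
    refine AddSubgroup.mem_zmultiples_iff.mpr ⟨-m, ?_⟩
    rw [zsmul_eq_mul, mul_one]; push_cast; ring

lemma proj_cont : Continuous proj := AddCircle.continuous_mk' 1
lemma proj_open : IsOpenMap proj := QuotientAddGroup.isOpenMap_coe
lemma proj_surj : Surjective proj := QuotientAddGroup.mk_surjective
lemma proj_lh : IsLocalHomeomorph proj := AddCircle.isLocalHomeomorph_coe 1
lemma proj_oqm : IsOpenQuotientMap proj := ⟨proj_surj, proj_cont, proj_open⟩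

lemma open_infinite {W : Set S1} (hW : IsOpen W) (hne : W.Nonempty) : W.Infinite := by
  obtain ⟨ζ, hζ⟩ := hne
  obtain ⟨t, rfl⟩ := proj_surj ζ
  have hpre : IsOpen (proj ⁻¹' W) := hW.preimage proj_cont
  obtain ⟨ε, hε, hball⟩ := Metric.isOpen_iff.mp hpre t hζ
  set δ := min (ε/2) (1/4) with hδdef
  have hδ : 0 < δ := by positivity
  have hδ2 : δ ≤ 1/4 := min_le_right _ _
  have hδ3 : δ < ε := lt_of_le_of_lt (min_le_left _ _) (by linarith)
  have hsub : Ioo t (t + δ) ⊆ proj ⁻¹' W := by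
    intro u hu
    apply hball
    rw [Real.ball_eq_Ioo]
    exact ⟨by linarith [hu.1], by linarith [hu.2]⟩
  have hinj : InjOn proj (Ioo t (t + δ)) := by
    intro u hu v hv huv
    obtain ⟨m, rfl⟩ := proj_eq_iff.mp huv
    have hm : |(m:ℝ)| < 1 := by
      rw [abs_lt]
      constructor <;> [linarith [hu.1, hu.2, hv.1, hv.2]; linarith [hu.1, hu.2, hv.1, hv.2]]
    have hm0 : |m| < 1 := by exact_mod_cast hm
    have : m = 0 := by rw [abs_lt] at hm0; omega
    simp [this]
  intro hfin
  exact (Set.Ioo_infinite (by linarith : t < t + δ))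
    (Set.Finite.of_finite_image (hfin.subset (image_subset_iff.mpr hsub)) hinj)

lemma no_max {V : Set ℝ} (hV : IsOpen V) {M : ℝ} (hM : M ∈ V) (hb : V ⊆ Iic M) : False := by
  obtain ⟨ε, hε, hball⟩ := Metric.isOpen_iff.mp hV M hM
  have hmem : M + ε/2 ∈ V := by
    apply hball
    rw [Metric.mem_ball, Real.dist_eq]
    rw [abs_of_nonneg (by linarith)]
    linarith
  have := hb hmem
  rw [mem_Iic] at this
  linarith

lemma injective_of_openMap {F : ℝ → ℝ} (hc : Continuous F) (ho : IsOpenMap F) :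
    Injective F := by
  intro a b hab
  by_contra hne
  wlog hlt : a < b generalizing a b
  · exact this hab.symm (Ne.symm hne) (lt_of_le_of_ne (not_lt.mp hlt) (Ne.symm hne))
  obtain ⟨cM, hcM, hmax⟩ := isCompact_Icc.exists_isMaxOn (s := Icc a b)
    ⟨a, left_mem_Icc.mpr hlt.le⟩ hc.continuousOn
  obtain ⟨cm, hcm, hmin⟩ := isCompact_Icc.exists_isMinOn (s := Icc a b)
    ⟨a, left_mem_Icc.mpr hlt.le⟩ hc.continuousOn
  have hVo : IsOpen (F '' Ioo a b) := ho _ isOpen_Ioo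
  rcases eq_or_ne (F cM) (F a) with hMa | hMa
  · rcases eq_or_ne (F cm) (F a) with hma | hma
    · have hmid : (a + b)/2 ∈ Ioo a b := ⟨by linarith, by linarith⟩
      refine no_max hVo (⟨(a+b)/2, hmid, rfl⟩ : F ((a+b)/2) ∈ F '' Ioo a b) ?_
      rintro v ⟨u, hu, rfl⟩
      have h1 : F u ≤ F cM := hmax (Ioo_subset_Icc_self hu)
      have h3 : F cm ≤ F ((a+b)/2) := hmin (Ioo_subset_Icc_self hmid)
      rw [mem_Iic]
      calc F u ≤ F cM := h1
        _ = F a := hMa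
        _ = F cm := hma.symm
        _ ≤ F ((a+b)/2) := h3
    · have hcmI : cm ∈ Ioo a b := by
        rcases hcm.1.lt_or_eq with h | h
        · rcases hcm.2.lt_or_eq with h2 | h2
          · exact ⟨h, h2⟩
          · exact absurd (h2 ▸ hab ▸ rfl : F cm = F a) hma
        · exact absurd (h ▸ rfl : F cm = F a).symm (Ne.symm hma)
      obtain ⟨ε, hε, hball⟩ := Metric.isOpen_iff.mp hVo (F cm) ⟨cm, hcmI, rfl⟩
      have hmem : F cm - ε/2 ∈ F '' Ioo a b := by
        apply hball
        rw [Metric.mem_ball, Real.dist_eq, abs_of_nonpos (by linarith)]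
        linarith
      obtain ⟨u, hu, huv⟩ := hmem
      have h4 : F cm ≤ F u := hmin (Ioo_subset_Icc_self hu)
      linarith
  · have hcMI : cM ∈ Ioo a b := by
      rcases hcM.1.lt_or_eq with h | h
      · rcases hcM.2.lt_or_eq with h2 | h2
        · exact ⟨h, h2⟩
        · exact absurd (h2 ▸ hab ▸ rfl : F cM = F a) hMa
      · exact absurd (h ▸ rfl : F cM = F a).symm (Ne.symm hMa)
    refine no_max hVo ⟨cM, hcMI, rfl⟩ ?_
    rintro v ⟨u, hu, rfl⟩
    exact hmax (Ioo_subset_Icc_self hu)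

end Helpers

def phiF (d : ℤ) (F : ℝ → ℝ) : ℝ → ℝ := fun x => F x - d * x
def gF (d : ℤ) (F : ℝ → ℝ) : ℕ → ℝ → ℝ := fun n x => phiF d F (F^[n] x) / (d:ℝ)^(n+1)
def HF (d : ℤ) (F : ℝ → ℝ) : ℝ → ℝ := fun x => x + ∑' n, gF d F n x

section HFactsSection
variable {d : ℤ} {F : ℝ → ℝ}

lemma Flift (hdeg : ∀ x : ℝ, F (x + 1) = F x + d) :
    ∀ (m : ℤ) (x : ℝ), F (x + m) = F x + m * d := by
  intro m
  induction m using Int.induction_on with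
  | zero => simp
  | succ k ih =>
    intro x
    have h1 : x + ((k:ℤ)+1:ℤ) = (x + (k:ℤ)) + 1 := by push_cast; ring
    rw [h1, hdeg, ih]
    push_cast; ring
  | pred k ih =>
    intro x
    have h1 : x + (-(k:ℤ)-1:ℤ) + 1 = x + (-(k:ℤ):ℤ) := by push_cast; ring
    have h2 := hdeg (x + (-(k:ℤ)-1:ℤ))
    rw [h1, ih] at h2
    have h3 : F (x + (-(k:ℤ)-1:ℤ)) = F x + (-(k:ℤ):ℤ) * d - d := by linarith
    rw [h3]; push_cast; ring

lemma phiF_per (hdeg : ∀ x : ℝ, F (x + 1) = F x + d) (x : ℝ) (m : ℤ) :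
    phiF d F (x + m) = phiF d F x := by
  simp only [phiF, Flift hdeg m x]
  ring

lemma phiF_bound (hF : Continuous F) (hdeg : ∀ x : ℝ, F (x + 1) = F x + d) :
    ∃ M : ℝ, 0 ≤ M ∧ ∀ x, |phiF d F x| ≤ M := by
  obtain ⟨C, hC⟩ := isCompact_Icc.exists_bound_of_continuousOn
    (s := Icc (0:ℝ) 1) ((hF.sub (continuous_const.mul continuous_id)).continuousOn)
  refine ⟨max C 0, le_max_right _ _, fun x => ?_⟩
  have h1 : phiF d F x = phiF d F (Int.fract x) := by
    have : x = Int.fract x + (⌊x⌋ : ℤ) := by rw [add_comm]; exact (Int.floor_add_fract x).symm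
    conv_lhs => rw [this]
    exact phiF_per hdeg _ _
  rw [h1]
  have h2 := hC (Int.fract x) ⟨(Int.fract_nonneg x), (Int.fract_lt_one x).le⟩
  calc |phiF d F (Int.fract x)| ≤ C := by simpa [phiF, Real.norm_eq_abs] using h2
    _ ≤ max C 0 := le_max_left _ _

lemma d_abs (hd : 1 < |d|) : (2:ℝ) ≤ |(d:ℝ)| := by
  have h : (2:ℤ) ≤ |d| := hd
  calc (2:ℝ) = ((2:ℤ):ℝ) := by norm_num
    _ ≤ ((|d|:ℤ):ℝ) := by exact_mod_cast h
    _ = |(d:ℝ)| := by push_cast; ring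

lemma d_ne (hd : 1 < |d|) : (d:ℝ) ≠ 0 := by
  have := d_abs hd
  intro h; rw [h] at this; simp at this; linarith

lemma gF_bound (hd : 1 < |d|) {M : ℝ} (hM0 : 0 ≤ M) (hM : ∀ x, |phiF d F x| ≤ M) :
    ∀ n x, ‖gF d F n x‖ ≤ M * (1/2)^n := by
  intro n x
  have h2 : (2:ℝ)^(n+1) ≤ |(d:ℝ)|^(n+1) := pow_le_pow_left₀ (by norm_num) (d_abs hd) _
  have hpos : (0:ℝ) < 2^(n+1) := by positivity
  have hposn : (0:ℝ) < 2^n := by positivity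
  have habs : ‖gF d F n x‖ = |phiF d F (F^[n] x)| / |(d:ℝ)|^(n+1) := by
    rw [Real.norm_eq_abs, gF, abs_div, abs_pow]
  rw [habs]
  calc |phiF d F (F^[n] x)| / |(d:ℝ)|^(n+1) ≤ M / 2^(n+1) := by
        apply div_le_div₀ hM0 (hM _) hpos h2
    _ ≤ M / 2^n := by
        apply div_le_div_of_nonneg_left hM0 hposn
        · rw [pow_succ]; nlinarith
    _ = M * (1/2)^n := by rw [one_div, inv_pow, ← div_eq_mul_inv]

lemma gF_summable (hd : 1 < |d|) {M : ℝ} (hM0 : 0 ≤ M) (hM : ∀ x, |phiF d F x| ≤ M) (x : ℝ) :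
    Summable (fun n => gF d F n x) := by
  apply Summable.of_norm_bounded ((summable_geometric_two).mul_left M)
  intro n
  simpa using gF_bound hd hM0 hM n x

lemma HF_cont (hd : 1 < |d|) (hF : Continuous F) (hdeg : ∀ x : ℝ, F (x + 1) = F x + d) :
    Continuous (HF d F) := by
  obtain ⟨M, hM0, hM⟩ := phiF_bound hF hdeg
  apply continuous_id.add
  apply continuous_tsum
  · intro n
    exact ((hF.sub (continuous_const.mul continuous_id)).comp (hF.iterate n)).div_const _
  · exact (summable_geometric_two).mul_left M
  · exact fun n x => gF_bound hd hM0 hM n x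

lemma gF_partial (hd : 1 < |d|) : ∀ (x : ℝ) (n : ℕ),
    F^[n] x / (d:ℝ)^n = x + ∑ k ∈ Finset.range n, gF d F k x := by
  intro x n
  induction n with
  | zero => simp
  | succ n ih =>
    rw [Finset.sum_range_succ, ← add_assoc, ← ih, Function.iterate_succ_apply']
    have hdn : ((d:ℝ))^n ≠ 0 := pow_ne_zero _ (d_ne hd)
    have hdn1 : ((d:ℝ))^(n+1) ≠ 0 := pow_ne_zero _ (d_ne hd)
    rw [show gF d F n x = phiF d F (F^[n] x) / (d:ℝ)^(n+1) from rfl, phiF]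
    field_simp
    ring

lemma HF_tendsto (hd : 1 < |d|) (hF : Continuous F) (hdeg : ∀ x : ℝ, F (x + 1) = F x + d)
    (x : ℝ) : Filter.Tendsto (fun n => F^[n] x / (d:ℝ)^n) Filter.atTop (nhds (HF d F x)) := by
  obtain ⟨M, hM0, hM⟩ := phiF_bound hF hdeg
  have h := ((gF_summable hd hM0 hM x).hasSum.tendsto_sum_nat).const_add x
  exact h.congr fun n => (gF_partial hd x n).symm

lemma Fiter (hdeg : ∀ x : ℝ, F (x + 1) = F x + d) :
    ∀ (n : ℕ) (m : ℤ) (x : ℝ), F^[n] (x + m) = F^[n] x + ((m * d^n : ℤ) : ℝ) := by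
  intro n
  induction n with
  | zero => intro m x; simp
  | succ n ih =>
    intro m x
    rw [Function.iterate_succ_apply', Function.iterate_succ_apply', ih]
    have := Flift hdeg (m * d^n) (F^[n] x)
    rw [this]
    push_cast; ring

lemma HF_int (hd : 1 < |d|) (hF : Continuous F) (hdeg : ∀ x : ℝ, F (x + 1) = F x + d)
    (x : ℝ) (m : ℤ) : HF d F (x + m) = HF d F x + m := by
  have hterm : ∀ n, gF d F n (x + m) = gF d F n x := by
    intro n
    simp only [gF, Fiter hdeg n m x, phiF_per hdeg]
  simp only [HF, tsum_congr hterm]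
  ring

lemma HF_semi (hd : 1 < |d|) (hF : Continuous F) (hdeg : ∀ x : ℝ, F (x + 1) = F x + d)
    (x : ℝ) : HF d F (F x) = d * HF d F x := by
  obtain ⟨M, hM0, hM⟩ := phiF_bound hF hdeg
  have h1 : ∀ n, gF d F n (F x) = (d:ℝ) * gF d F (n+1) x := by
    intro n
    simp only [gF, ← Function.iterate_succ_apply]
    have hne : ((d:ℝ))^(n+1) ≠ 0 := pow_ne_zero _ (d_ne hd)
    have hne2 : ((d:ℝ))^(n+1+1) ≠ 0 := pow_ne_zero _ (d_ne hd)
    field_simp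
    ring
  have hsum := gF_summable hd hM0 hM x
  have hzero := hsum.tsum_eq_zero_add
  have h2 : ∑' n, gF d F n (F x) = (d:ℝ) * ∑' n, gF d F (n+1) x := by
    rw [tsum_congr h1, tsum_mul_left]
  have hg0 : (d:ℝ) * gF d F 0 x = F x - d * x := by
    simp only [gF, phiF, pow_one, Function.iterate_zero_apply]
    field_simp [d_ne hd]
    ring
  have hLHS : HF d F (F x) = F x + ∑' n, gF d F n (F x) := rfl
  rw [hLHS, h2]
  have hX : HF d F x = x + ∑' n, gF d F n x := rfl
  have hshift : ∑' n, gF d F (n+1) x = (∑' n, gF d F n x) - gF d F 0 x := by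
    rw [hzero]; ring
  rw [hshift]
  have expand : (d:ℝ) * ((∑' n, gF d F n x) - gF d F 0 x)
      = (d:ℝ) * (∑' n, gF d F n x) - (d:ℝ) * gF d F 0 x := by ring
  rw [expand, hg0, hX]
  ring

lemma HF_iterate (hd : 1 < |d|) (hF : Continuous F) (hdeg : ∀ x : ℝ, F (x + 1) = F x + d)
    (k : ℕ) (x : ℝ) : HF d F (F^[k] x) = (d:ℝ)^k * HF d F x := by
  induction k with
  | zero => simp
  | succ k ih =>
    rw [Function.iterate_succ_apply', HF_semi hd hF hdeg, ih, pow_succ]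
    ring

lemma HF_mono (hd : 1 < |d|) (hF : Continuous F) (hdeg : ∀ x : ℝ, F (x + 1) = F x + d)
    (hinj : Function.Injective F) : Monotone (HF d F) := by
  have hdisj := hF.strictMono_of_inj hinj
  have hsgn : (StrictMono F ∧ 0 < (d:ℝ)) ∨ (StrictAnti F ∧ (d:ℝ) < 0) := by
    rcases hdisj with hm | ha
    · left
      refine ⟨hm, ?_⟩
      have := hm (lt_add_one (0:ℝ))
      rw [hdeg] at this
      linarith
    · right
      refine ⟨ha, ?_⟩
      have := ha (lt_add_one (0:ℝ))
      rw [hdeg] at this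
      linarith
  have hgm : ∀ n : ℕ, Monotone (fun x => F^[n] x / (d:ℝ)^n) := by
    intro n
    induction n with
    | zero => intro x y h; simpa using h
    | succ n ih =>
      intro x y hxy
      have hprev := ih hxy
      simp only at hprev ⊢
      rw [Function.iterate_succ_apply', Function.iterate_succ_apply']
      rcases hsgn with ⟨hm, hdpos⟩ | ⟨ha, hdneg⟩
      · have hdn : (0:ℝ) < (d:ℝ)^n := pow_pos hdpos n
        have hab : F^[n] x ≤ F^[n] y := (div_le_div_iff_of_pos_right hdn).mp hprev
        have hFle : F (F^[n] x) ≤ F (F^[n] y) := hm.monotone hab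
        have hdn1 : (0:ℝ) < (d:ℝ)^(n+1) := pow_pos hdpos (n+1)
        exact (div_le_div_iff_of_pos_right hdn1).mpr hFle
      · rcases lt_trichotomy ((d:ℝ)^n) 0 with hneg | hzero | hpos
        · have hab : F^[n] y ≤ F^[n] x := (div_le_div_right_of_neg hneg).mp hprev
          have hFle : F (F^[n] x) ≤ F (F^[n] y) := ha.antitone hab
          have hdn1 : (0:ℝ) < (d:ℝ)^(n+1) := by
            rw [pow_succ]; exact mul_pos_of_neg_of_neg hneg hdneg
          exact (div_le_div_iff_of_pos_right hdn1).mpr hFle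
        · exact absurd hzero (pow_ne_zero n (d_ne hd))
        · have hab : F^[n] x ≤ F^[n] y := (div_le_div_iff_of_pos_right hpos).mp hprev
          have hFle : F (F^[n] y) ≤ F (F^[n] x) := ha.antitone hab
          have hdn1 : ((d:ℝ))^(n+1) < 0 := by
            rw [pow_succ]; exact mul_neg_of_pos_of_neg hpos hdneg
          exact (div_le_div_right_of_neg hdn1).mpr hFle
  intro x y hxy
  exact le_of_tendsto_of_tendsto' (HF_tendsto hd hF hdeg x) (HF_tendsto hd hF hdeg y)
    (fun n => hgm n hxy)

lemma HF_surj (hd : 1 < |d|) (hF : Continuous F) (hdeg : ∀ x : ℝ, F (x + 1) = F x + d) :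
    Function.Surjective (HF d F) := by
  intro y
  obtain ⟨m, hm⟩ := exists_int_ge (y - HF d F 0)
  obtain ⟨m', hm'⟩ := exists_int_le (y - HF d F 0)
  have h1 : HF d F ((0:ℝ) + m') ≤ y := by rw [HF_int hd hF hdeg]; linarith
  have h2 : y ≤ HF d F ((0:ℝ) + m) := by rw [HF_int hd hF hdeg]; linarith
  have hle : ((0:ℝ) + m') ≤ ((0:ℝ) + m) := by
    simp only [zero_add]
    linarith
  have := intermediate_value_Icc hle (HF_cont hd hF hdeg).continuousOn
  obtain ⟨x, _, hx⟩ := this ⟨h1, h2⟩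
  exact ⟨x, hx⟩

end HFactsSection

/-- a transitive covering map of the circle of degree `d`, `|d|>1`,
is topologically conjugate to `m_d`. -/
theorem transitive_covering_conjugate_to_md
    (d : ℤ) (hd : 1 < |d|)
    (f : S1 → S1) (hcov : IsCoveringMap f)
    (F : ℝ → ℝ) (hF : Continuous F)
    (hlift : ∀ x : ℝ, proj (F x) = f (proj x))
    (hdeg : ∀ x : ℝ, F (x + 1) = F x + d)
    (htrans : ∃ x : S1, Dense (Set.range fun n : ℕ => f^[n] x)) :
    ∃ h : S1 ≃ₜ S1, ∀ z, h (f z) = md d (h z) := by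
  classical
  -- F is injective
  have hproj_comp : proj ∘ F = f ∘ proj := funext hlift
  have hFlh : IsLocalHomeomorph F := by
    apply IsLocalHomeomorph.of_comp (g := proj)
    · rw [hproj_comp]; exact hcov.isLocalHomeomorph.comp proj_lh
    · exact proj_lh
    · exact hF
  have hFinj : Injective F := injective_of_openMap hF hFlh.isOpenMap
  set H := HF d F with hHdef
  have Hcont : Continuous H := HF_cont hd hF hdeg
  have Hmono : Monotone H := HF_mono hd hF hdeg hFinj
  have Hsurj : Surjective H := HF_surj hd hF hdeg
  have Hint : ∀ (x : ℝ) (m : ℤ), H (x + m) = H x + m := HF_int hd hF hdeg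
  have Hsemi : ∀ x, H (F x) = d * H x := HF_semi hd hF hdeg
  have Hiter : ∀ (k : ℕ) (x : ℝ), H (F^[k] x) = (d:ℝ)^k * H x := HF_iterate hd hF hdeg
  obtain ⟨x₀, hdense⟩ := htrans
  obtain ⟨x, hx⟩ := proj_surj x₀
  have horb : ∀ n, f^[n] x₀ = proj (F^[n] x) := by
    intro n
    induction n with
    | zero => simp [hx]
    | succ n ih =>
      rw [Function.iterate_succ_apply', ih, ← hlift, Function.iterate_succ_apply']
  have visit : ∀ W : Set S1, IsOpen W → W.Nonempty → ∀ N : ℕ, ∃ n, N ≤ n ∧ f^[n] x₀ ∈ W := by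
    intro W hWo hWne N
    have hWinf := open_infinite hWo hWne
    have hEfin : (Set.image (fun k => f^[k] x₀) {k | k < N}).Finite :=
      (Set.finite_lt_nat N).image _
    have hne2 : (W \ Set.image (fun k => f^[k] x₀) {k | k < N}).Nonempty :=
      (hWinf.diff hEfin).nonempty
    have hop2 : IsOpen (W \ Set.image (fun k => f^[k] x₀) {k | k < N}) :=
      hWo.sdiff hEfin.isClosed
    obtain ⟨ζ, hζr, hζW⟩ := hdense.exists_mem_open hop2 hne2
    obtain ⟨n, rfl⟩ := hζr
    refine ⟨n, ?_, hζW.1⟩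
    by_contra hn
    exact hζW.2 ⟨n, (show n ∈ {k | k < N} from by simp only [Set.mem_setOf_eq]; omega), rfl⟩
  -- the key injectivity claim
  have key : ∀ a b : ℝ, a < b → H a = H b → False := by
    intro a b0 hab hHab
    set b := min b0 (a + 2⁻¹) with hbdef
    have hab' : a < b := lt_min hab (by linarith)
    have hHb : H b = H a := le_antisymm (hHab ▸ Hmono (min_le_left _ _)) (Hmono hab'.le)
    set y := H a with hydef
    have hval : ∀ t ∈ Icc a b, H t = y := fun t ht =>
      le_antisymm (hHb ▸ Hmono ht.2) (Hmono ht.1)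
    set U := proj '' Ioo a b with hUdef
    have hUo : IsOpen U := proj_open _ isOpen_Ioo
    have hUne : U.Nonempty := ⟨proj ((a+b)/2), ⟨(a+b)/2, ⟨by linarith, by linarith⟩, rfl⟩⟩
    obtain ⟨n1, -, hn1⟩ := visit U hUo hUne 0
    obtain ⟨n2, hn12, hn2⟩ := visit U hUo hUne (n1+1)
    set p := n2 - n1 with hpdef
    have hp1 : 1 ≤ p := by omega
    have hn2eq : n2 = n1 + p := by omega
    have val_of_mem : ∀ n, f^[n] x₀ ∈ U → ∃ m : ℤ, (d:ℝ)^n * H x = y + m := by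
      intro n hn
      obtain ⟨t, ht, hteq⟩ := hn
      obtain ⟨m, hm⟩ := proj_eq_iff.mp (hteq.trans (horb n))
      refine ⟨m, ?_⟩
      calc (d:ℝ)^n * H x = H (F^[n] x) := (Hiter n x).symm
        _ = H (t + m) := by rw [hm]
        _ = H t + m := Hint t m
        _ = y + m := by rw [hval t (Ioo_subset_Icc_self ht)]
    obtain ⟨m1, hm1⟩ := val_of_mem n1 hn1
    obtain ⟨m2, hm2⟩ := val_of_mem n2 hn2
    have hper : ∃ m₀ : ℤ, (d:ℝ)^p * y = y + m₀ := by
      refine ⟨m2 - d^p * m1, ?_⟩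
      have e1 : (d:ℝ)^p * ((d:ℝ)^n1 * H x) = (d:ℝ)^n2 * H x := by
        rw [hn2eq, pow_add]; ring
      have h3 : (d:ℝ)^p * ((d:ℝ)^n1 * H x) = (d:ℝ)^p * (y + m1) := by rw [hm1]
      rw [e1] at h3
      have e2 : (d:ℝ)^p * (y + (m1:ℝ)) = (d:ℝ)^p * y + (d:ℝ)^p * m1 := by ring
      push_cast
      linarith [hm2, h3, e2]
    obtain ⟨m₀, hm₀⟩ := hper
    set Ki : ℕ → Set ℝ := fun i => {t | ∃ m : ℤ, H t = (d:ℝ)^i * y + m} with hKidef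
    set Pi : ℕ → Set S1 := fun i => proj '' Ki i with hPidef
    set Q : Set S1 := ⋃ i ∈ Finset.range p, Pi i with hQdef
    have hKisat : ∀ (i : ℕ) (t : ℝ) (m : ℤ), t ∈ Ki i → t + m ∈ Ki i := by
      rintro i t m ⟨m', hm'⟩
      exact ⟨m' + m, by rw [Hint, hm']; push_cast; ring⟩
    have hmemPi : ∀ (i : ℕ) (t : ℝ), proj t ∈ Pi i ↔ t ∈ Ki i := by
      intro i t
      constructor
      · rintro ⟨s, hs, hst⟩
        obtain ⟨m, rfl⟩ := proj_eq_iff.mp hst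
        exact hKisat i s m hs
      · intro h; exact ⟨t, h, rfl⟩
    have hKiclosed : ∀ i, IsClosed (Ki i) := by
      intro i
      have : Ki i = H ⁻¹' ((fun r => r - (d:ℝ)^i * y) ⁻¹' (Set.range ((↑) : ℤ → ℝ))) := by
        ext t
        simp only [mem_preimage, mem_setOf_eq, Set.mem_range]
        constructor
        · rintro ⟨m, hm⟩; exact ⟨m, by rw [hm]; ring⟩
        · rintro ⟨m, hm⟩; exact ⟨m, by linarith⟩
      rw [this]
      exact ((Int.isClosedEmbedding_coe_real.isClosed_range.preimage
        (continuous_id.sub continuous_const)).preimage Hcont)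
    have hPiclosed : ∀ i, IsClosed (Pi i) := by
      intro i
      rw [← isOpen_compl_iff]
      have hKisat' : ∀ (t : ℝ) (m : ℤ), t + m ∈ Ki i → t ∈ Ki i := by
        intro t m h
        have h2 := hKisat i (t + m) (-m) h
        have h3 : t + (m:ℝ) + ((-m : ℤ):ℝ) = t := by push_cast; ring
        rwa [h3] at h2
      have hcompl : (Pi i)ᶜ = proj '' (Ki i)ᶜ := by
        ext ζ
        obtain ⟨t, rfl⟩ := proj_surj ζ
        constructor
        · intro h
          exact ⟨t, fun hK => h ((hmemPi i t).mpr hK), rfl⟩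
        · rintro ⟨s, hs, hst⟩ habs
          obtain ⟨m, rfl⟩ := proj_eq_iff.mp hst
          exact hs (hKisat' s m ((hmemPi i (s + m)).mp habs))
      rw [hcompl]
      exact proj_open _ (hKiclosed i).isOpen_compl
    have hQclosed : IsClosed Q :=
      Set.Finite.isClosed_biUnion (Finset.range p).finite_toSet (fun i _ => hPiclosed i)
    have hfQ : ∀ ζ ∈ Q, f ζ ∈ Q := by
      intro ζ hζ
      rw [Set.mem_iUnion₂] at hζ
      obtain ⟨i, hi, hζi⟩ := hζ
      rw [Finset.mem_range] at hi
      obtain ⟨t, ht, rfl⟩ := hζi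
      obtain ⟨m, hm⟩ := ht
      rw [← hlift, Set.mem_iUnion₂]
      have hHFt : H (F t) = (d:ℝ)^(i+1) * y + ((d*m : ℤ):ℝ) := by
        rw [Hsemi, hm]; push_cast; rw [pow_succ]; ring
      rcases Nat.lt_or_ge (i+1) p with hip | hip
      · exact ⟨i+1, Finset.mem_range.mpr hip, ⟨F t, ⟨d*m, hHFt⟩, rfl⟩⟩
      · have hieq : i + 1 = p := by omega
        refine ⟨0, Finset.mem_range.mpr (by omega), ⟨F t, ⟨m₀ + d*m, ?_⟩, rfl⟩⟩
        have hpw : (d:ℝ)^(i+1) = (d:ℝ)^p := by rw [hieq]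
        rw [hHFt, hpw]
        push_cast
        simp only [pow_zero, one_mul]
        linarith [hm₀]
    have hstart : f^[n1] x₀ ∈ Q := by
      obtain ⟨t, ht, hteq⟩ := hn1
      have : f^[n1] x₀ ∈ Pi 0 := by
        rw [← hteq, hmemPi]
        exact ⟨0, by rw [hval t (Ioo_subset_Icc_self ht)]; simp⟩
      exact Set.mem_biUnion (Finset.mem_range.mpr (by omega)) this
    have htrap : ∀ j, f^[n1 + j] x₀ ∈ Q := by
      intro j
      induction j with
      | zero => simpa using hstart
      | succ j ih =>
        have heq : n1 + (j+1) = (n1 + j) + 1 := rfl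
        rw [heq, Function.iterate_succ_apply']
        exact hfQ _ ih
    have hSfin : (Set.image (fun i => Int.fract ((d:ℝ)^i * y)) {i | i < p}).Finite :=
      (Set.finite_lt_nat p).image _
    obtain ⟨v, hvIco, hvS⟩ :=
      ((Set.Ico_infinite (by norm_num : (0:ℝ) < 1)).diff hSfin).nonempty
    obtain ⟨tstar, htstar⟩ := Hsurj v
    have hζstar : proj tstar ∉ Q := by
      intro hmem
      rw [Set.mem_iUnion₂] at hmem
      obtain ⟨i, hi, hmemi⟩ := hmem
      rw [Finset.mem_range] at hi
      obtain ⟨m, hm⟩ := (hmemPi i tstar).mp hmemi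
      apply hvS
      refine ⟨i, hi, ?_⟩
      have hv : v = (d:ℝ)^i * y + m := by rw [← htstar, hm]
      have h1 : Int.fract v = Int.fract ((d:ℝ)^i * y) := by
        rw [hv, Int.fract_add_intCast]
      have h2 : Int.fract v = v := Int.fract_eq_self.mpr ⟨hvIco.1, hvIco.2⟩
      show Int.fract ((d:ℝ)^i * y) = v
      rw [← h1]
      exact h2
    obtain ⟨n, hn1n, hnW⟩ := visit Qᶜ hQclosed.isOpen_compl ⟨proj tstar, hζstar⟩ n1
    refine hnW ?_
    have heq : n = n1 + (n - n1) := by omega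
    rw [heq]
    exact htrap _
  have Hinj : Injective H := by
    intro a b hab
    by_contra hne
    rcases lt_or_gt_of_ne hne with h | h
    · exact key a b h hab
    · exact key b a h hab.symm
  -- build the conjugating homeomorphism
  have HsM : StrictMono H := Hmono.strictMono_of_injective Hinj
  let G : ℝ → ℝ := fun t => Classical.choose (Hsurj t)
  have hHG : ∀ t, H (G t) = t := fun t => Classical.choose_spec (Hsurj t)
  have hGH : ∀ t, G (H t) = t := fun t => Hinj (by rw [hHG])
  have hGint : ∀ (t : ℝ) (m : ℤ), G (t + m) = G t + m := by
    intro t m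
    apply Hinj
    rw [hHG, Hint, hHG]
  haveI : Fact ((0:ℝ) < 1) := ⟨one_pos⟩
  let rep : S1 → ℝ := fun ζ => ((AddCircle.equivIco 1 0 ζ : Set.Ico (0:ℝ) (0+1)) : ℝ)
  have hrep : ∀ ζ, proj (rep ζ) = ζ := fun ζ => (AddCircle.equivIco 1 0).symm_apply_apply ζ
  have hdesc : ∀ (φ : ℝ → ℝ), (∀ (t : ℝ) (m : ℤ), φ (t + m) = φ t + m) →
      ∀ t, proj (φ (rep (proj t))) = proj (φ t) := by
    intro φ hφ t
    set r := rep (proj t) with hr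
    obtain ⟨m, hm⟩ := proj_eq_iff.mp (hrep (proj t))
    rw [hm, hφ]
    exact proj_eq_iff.mpr ⟨m, rfl⟩
  let hdT : S1 → S1 := fun ζ => proj (H (rep ζ))
  let gdT : S1 → S1 := fun ζ => proj (G (rep ζ))
  have hdT_proj : ∀ t, hdT (proj t) = proj (H t) := fun t => hdesc H Hint t
  have gdT_proj : ∀ t, gdT (proj t) = proj (G t) := fun t => hdesc G hGint t
  have hdT_cont : Continuous hdT := by
    rw [← proj_oqm.continuous_comp_iff]
    have hcomp : hdT ∘ proj = proj ∘ H := funext fun t => hdT_proj t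
    rw [hcomp]
    exact proj_cont.comp Hcont
  have hleft : ∀ ζ, gdT (hdT ζ) = ζ := by
    intro ζ
    obtain ⟨t, rfl⟩ := proj_surj ζ
    rw [hdT_proj, gdT_proj, hGH]
  have hright : ∀ ζ, hdT (gdT ζ) = ζ := by
    intro ζ
    obtain ⟨t, rfl⟩ := proj_surj ζ
    rw [gdT_proj, hdT_proj, hHG]
  let E : S1 ≃ S1 := ⟨hdT, gdT, hleft, hright⟩
  refine ⟨hdT_cont.homeoOfEquivCompactToT2 (f := E), ?_⟩
  intro z
  obtain ⟨t, rfl⟩ := proj_surj z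
  show hdT (f (proj t)) = md d (hdT (proj t))
  rw [← hlift, hdT_proj, hdT_proj]
  show proj (H (F t)) = d • proj (H t)
  rw [Hsemi, ← zsmul_eq_mul]
  exact AddCircle.coe_zsmul 1
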